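/- If two probability distributions p and q on {0,1}^K satisfy the same frequencies for all itemsets in an antimonotonic family F (i.e., p(B=1)=q(B=1) for every B in F), then for every itemset C in F and every binary vector t of length |C|, p(C=t)=q(C=t). -/
import Mathlib


open Finset

/-- A probability distribution on `{0,1}^K`. -/
def IsDist {Ω : Type*} [Fintype Ω] (p : Ω → ℝ) : Prop :=
  (∀ x, 0 ≤ p x) ∧ ∑ x, p x = 1

/-- The frequency `p(B = 1)` of an itemset `B`. -/
def freq {K : ℕ} (p : (Fin K → Bool) → ℝ) (B : Finset (Fin K)) : ℝ :=
  ∑ x : Fin K → Bool, if ∀ i ∈ B, x i = true then p x else 0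

/-- The probability `p(C = t)`: all attributes in `C` take the values given by `t`. -/
def proj {K : ℕ} (p : (Fin K → Bool) → ℝ) (C : Finset (Fin K)) (t : Fin K → Bool) : ℝ :=
  ∑ x : Fin K → Bool, if ∀ i ∈ C, x i = t i then p x else 0

lemma proj_eq_freq {K : ℕ} (p : (Fin K → Bool) → ℝ) (C : Finset (Fin K))
    (t : Fin K → Bool) (ht : ∀ i ∈ C, t i = true) : proj p C t = freq p C := by
  unfold proj freq
  refine Finset.sum_congr rfl fun x _ => ?_
  have : (∀ i ∈ C, x i = t i) ↔ (∀ i ∈ C, x i = true) := by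
    constructor
    · intro h i hi; rw [h i hi, ht i hi]
    · intro h i hi; rw [h i hi, ht i hi]
  simp [this]

lemma proj_split {K : ℕ} (p : (Fin K → Bool) → ℝ) (C : Finset (Fin K))
    (t : Fin K → Bool) (i : Fin K) (hi : i ∈ C) (hti : t i = false) :
    proj p (C.erase i) t = proj p C t + proj p C (Function.update t i true) := by
  unfold proj
  rw [← Finset.sum_add_distrib]
  refine Finset.sum_congr rfl fun x _ => ?_
  by_cases hxi : x i = true
  · have h1 : ¬ (∀ j ∈ C, x j = t j) := by
      intro h; rw [h i hi, hti] at hxi; exact absurd hxi (by simp)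
    have h2 : (∀ j ∈ C.erase i, x j = t j) ↔
        (∀ j ∈ C, x j = Function.update t i true j) := by
      constructor
      · intro h j hj
        by_cases hji : j = i
        · subst hji; simp [Function.update_self, hxi]
        · rw [Function.update_of_ne hji]; exact h j (Finset.mem_erase.mpr ⟨hji, hj⟩)
      · intro h j hj
        obtain ⟨hji, hjC⟩ := Finset.mem_erase.mp hj
        have := h j hjC
        rwa [Function.update_of_ne hji] at this
    rw [if_neg h1]
    by_cases h3 : ∀ j ∈ C.erase i, x j = t j
    · rw [if_pos h3, if_pos (h2.mp h3)]; ring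
    · rw [if_neg h3, if_neg (fun h => h3 (h2.mpr h))]; ring
  · have hxi' : x i = false := by
      cases hx : x i
      · rfl
      · exact absurd hx hxi
    have h1 : ¬ (∀ j ∈ C, x j = Function.update t i true j) := by
      intro h
      have := h i hi
      rw [Function.update_self, hxi'] at this
      exact absurd this (by simp)
    have h2 : (∀ j ∈ C.erase i, x j = t j) ↔ (∀ j ∈ C, x j = t j) := by
      constructor
      · intro h j hj
        by_cases hji : j = i
        · subst hji; rw [hxi', hti]
        · exact h j (Finset.mem_erase.mpr ⟨hji, hj⟩)
      · intro h j hj; exact h j (Finset.mem_erase.mp hj).2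
    rw [if_neg h1]
    by_cases h3 : ∀ j ∈ C.erase i, x j = t j
    · rw [if_pos h3, if_pos (h2.mp h3)]; ring
    · rw [if_neg h3, if_neg (fun h => h3 (h2.mpr h))]; ring


/-- If two distributions satisfy the same frequencies on an antimonotonic family `F`,
then they agree on `p(C = t)` for every `C ∈ F` and every binary vector `t`. -/
theorem projections_unique {K : ℕ} (F : Set (Finset (Fin K)))
    (hF : ∀ B ∈ F, ∀ B' ⊆ B, B' ∈ F)
    (p q : (Fin K → Bool) → ℝ) (hp : IsDist p) (hq : IsDist q)
    (hfreq : ∀ B ∈ F, freq p B = freq q B) :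
    ∀ C ∈ F, ∀ t : Fin K → Bool, proj p C t = proj q C t := by
  suffices h : ∀ n, ∀ C ∈ F, ∀ t : Fin K → Bool,
      (C.filter fun i => t i = false).card = n → proj p C t = proj q C t by
    intro C hC t
    exact h _ C hC t rfl
  intro n
  induction n using Nat.strong_induction_on with
  | _ n ih =>
    intro C hC t hcard
    rcases Nat.eq_zero_or_pos n with h0 | hpos
    · subst h0
      have hemp : C.filter (fun i => t i = false) = ∅ := Finset.card_eq_zero.mp hcard
      have htall : ∀ i ∈ C, t i = true := by
        intro i hiC
        by_contra h
        have hf : t i = false := by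
          cases hx : t i
          · rfl
          · exact absurd hx h
        have : i ∈ C.filter (fun i => t i = false) := Finset.mem_filter.mpr ⟨hiC, hf⟩
        simp [hemp] at this
      rw [proj_eq_freq p C t htall, proj_eq_freq q C t htall]
      exact hfreq C hC
    · obtain ⟨i, hi⟩ := Finset.card_pos.mp (hcard ▸ hpos)
      obtain ⟨hiC, hti⟩ := Finset.mem_filter.mp hi
      set u := Function.update t i true with hu
      have hfilter_erase : ((C.erase i).filter fun j => t j = false)
          = (C.filter fun j => t j = false).erase i := by
        ext j
        simp only [Finset.mem_filter, Finset.mem_erase]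
        tauto
      have hfilter_u : (C.filter fun j => u j = false)
          = (C.filter fun j => t j = false).erase i := by
        ext j
        simp only [Finset.mem_filter, Finset.mem_erase]
        constructor
        · rintro ⟨hjC, hj⟩
          have hji : j ≠ i := by
            intro h; subst h
            rw [hu, Function.update_self] at hj
            exact absurd hj (by simp)
          rw [hu, Function.update_of_ne hji] at hj
          exact ⟨hji, hjC, hj⟩
        · rintro ⟨hji, hjC, hj⟩
          rw [hu, Function.update_of_ne hji]
          exact ⟨hjC, hj⟩
      have hcard' : ((C.filter fun j => t j = false).erase i).card = n - 1 := by
        rw [Finset.card_erase_of_mem hi, hcard]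
      have hn1 : n - 1 < n := Nat.sub_lt hpos one_pos
      have h1 : proj p (C.erase i) t = proj q (C.erase i) t := by
        apply ih (n-1) hn1 (C.erase i) (hF C hC _ (Finset.erase_subset i C))
        rw [hfilter_erase]; exact hcard'
      have h2 : proj p C u = proj q C u := by
        apply ih (n-1) hn1 C hC
        rw [hfilter_u]; exact hcard'
      have hsp := proj_split p C t i hiC hti
      have hsq := proj_split q C t i hiC hti
      rw [← hu] at hsp hsq
      linarith
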